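/- For x ∈ Δⁿ, if the down-set ↓x = {y : y ⊑ x} is a chain in the Bayesian order, then x has at most binary spectrum, i.e., x ∈ Coord(Δⁿ). -/

import Mathlib

open Finset

/-- Δⁿ: probability distributions on {1,…,n}. -/
def IsDist {n : ℕ} (x : Fin n → ℝ) : Prop :=
  (∀ i, 0 ≤ x i) ∧ ∑ i, x i = 1

/-- The adjacent-index inequalities  xᵢ yᵢ₊₁ ≤ xᵢ₊₁ yᵢ  for all i ∈ {1,…,n-1}. -/
def AdjLE {n : ℕ} (x y : Fin n → ℝ) : Prop :=
  ∀ i : ℕ, ∀ h : i + 1 < n,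
    x ⟨i, Nat.lt_of_succ_lt h⟩ * y ⟨i + 1, h⟩ ≤ x ⟨i + 1, h⟩ * y ⟨i, Nat.lt_of_succ_lt h⟩

/-- The Bayesian order on Δⁿ: x ⊑ y iff some permutation σ monotonizes both
(x∘σ, y∘σ decreasing, i.e. in Λⁿ) and the adjacent inequalities hold. -/
def BayesLE {n : ℕ} (x y : Fin n → ℝ) : Prop :=
  ∃ σ : Equiv.Perm (Fin n),
    Antitone (x ∘ σ) ∧ Antitone (y ∘ σ) ∧ AdjLE (x ∘ σ) (y ∘ σ)

/-! ### Auxiliary lemmas -/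

/-- A lower Finset in `Fin n` is an initial segment determined by its card. -/
lemma lowerFin_mem_iff {n : ℕ} (S : Finset (Fin n))
    (hlow : ∀ k ∈ S, ∀ k', k' ≤ k → k' ∈ S) (k : Fin n) :
    k ∈ S ↔ (k : ℕ) < S.card := by
  constructor
  · intro hk
    have hsub : Finset.Iic k ⊆ S := fun j hj => hlow k hk j (Finset.mem_Iic.mp hj)
    have h1 := Finset.card_le_card hsub
    have h2 : (Finset.Iic k).card = (k : ℕ) + 1 := Fin.card_Iic k
    omega
  · intro hk
    by_contra hkS
    have hsub : S ⊆ Finset.Iio k := by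
      intro s hs
      rw [Finset.mem_Iio]
      by_contra hns
      exact hkS (hlow s hs k (le_of_not_gt hns))
    have h1 := Finset.card_le_card hsub
    have h2 : (Finset.Iio k).card = (k : ℕ) := Fin.card_Iio k
    omega

/-- An antitone two-block step function forces any monotonizing permutation to
preserve the blocks. -/
lemma perm_block {n i : ℕ} {A B : ℝ} (hBA : B < A) (τ : Equiv.Perm (Fin n))
    (hmono : Antitone (fun k : Fin n => if ((τ k : Fin n) : ℕ) ≤ i then A else B)) :
    ∀ k : Fin n, ((τ k : Fin n) : ℕ) ≤ i ↔ (k : ℕ) ≤ i := by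
  set S : Finset (Fin n) := Finset.univ.filter (fun k => ((τ k : Fin n) : ℕ) ≤ i) with hS
  set T : Finset (Fin n) := Finset.univ.filter (fun k : Fin n => (k : ℕ) ≤ i) with hT
  have hmemS : ∀ k : Fin n, k ∈ S ↔ ((τ k : Fin n) : ℕ) ≤ i := by
    intro k; simp [hS]
  have hmemT : ∀ k : Fin n, k ∈ T ↔ (k : ℕ) ≤ i := by
    intro k; simp [hT]
  have hcard : S.card = T.card := by
    apply Finset.card_bij' (fun k _ => τ k) (fun k _ => τ.symm k)
    · intro k hk; rw [hmemT]; exact (hmemS k).mp hk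
    · intro k hk; rw [hmemS]; simpa using (hmemT k).mp hk
    · intro k _; simp
    · intro k _; simp
  have hlowS : ∀ k ∈ S, ∀ k', k' ≤ k → k' ∈ S := by
    intro k hk k' hk'
    rw [hmemS] at hk ⊢
    have := hmono hk'
    by_contra hcon
    simp only [hk, if_pos] at this
    rw [if_neg hcon] at this
    exact absurd this (not_le.mpr hBA)
  have hlowT : ∀ k ∈ T, ∀ k', k' ≤ k → k' ∈ T := by
    intro k hk k' hk'
    rw [hmemT] at hk ⊢
    exact le_trans (Fin.le_iff_val_le_val.mp hk') hk
  intro k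
  rw [← hmemS, ← hmemT, lowerFin_mem_iff S hlowS, lowerFin_mem_iff T hlowT, hcard]

/-- step functions are antitone. -/
lemma antitone_step {n i : ℕ} {A B : ℝ} (hBA : B ≤ A) :
    Antitone (fun k : Fin n => if (k : ℕ) ≤ i then A else B) := by
  intro k k' h
  dsimp only
  split_ifs with h1 h2 h2
  · exact le_rfl
  · exact absurd (le_trans (Fin.le_iff_val_le_val.mp h) h1) h2
  · exact hBA
  · exact le_rfl

lemma sum_step {n i : ℕ} (hi : i + 1 ≤ n) (A B : ℝ) :
    ∑ k : Fin n, (if (k : ℕ) ≤ i then A else B)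
      = ((i+1 : ℕ) : ℝ) * A + ((n - (i+1) : ℕ) : ℝ) * B := by
  rw [Fin.sum_univ_eq_sum_range (fun k => if k ≤ i then A else B)]
  rw [Finset.range_eq_Ico, ← Finset.sum_Ico_consecutive _ (Nat.zero_le (i+1)) hi]
  have h1 : (∑ k ∈ Finset.Ico 0 (i+1), if k ≤ i then A else B) = ((i+1:ℕ):ℝ) * A := by
    rw [Finset.sum_congr rfl (fun k hk => if_pos (by
      simp only [Finset.mem_Ico] at hk; omega))]
    simp [Nat.card_Ico, nsmul_eq_mul]
  have h2 : (∑ k ∈ Finset.Ico (i+1) n, if k ≤ i then A else B) = ((n-(i+1):ℕ):ℝ) * B := by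
    rw [Finset.sum_congr rfl (fun k hk => if_neg (by
      simp only [Finset.mem_Ico] at hk; omega))]
    simp [Nat.card_Ico, nsmul_eq_mul]
  rw [h1, h2]

/-- If an antitone tuple strictly decreases between p and q, there is an adjacent
strict descent in between. -/
lemma exists_descent {n : ℕ} {w : Fin n → ℝ} (p q : Fin n)
    (hpq : p < q) (hval : w q < w p) :
    ∃ i : ℕ, ∃ h : i + 1 < n, (p : ℕ) ≤ i ∧ i + 1 ≤ (q : ℕ) ∧
      w ⟨i+1, h⟩ < w ⟨i, Nat.lt_of_succ_lt h⟩ := by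
  by_contra hcon
  push_neg at hcon
  have key : ∀ d : ℕ, ∀ hd : (p : ℕ) + d < n, (p:ℕ) + d ≤ (q:ℕ) → w p ≤ w ⟨(p:ℕ) + d, hd⟩ := by
    intro d
    induction d with
    | zero => intro hd _; simp [Fin.eta]
    | succ d ih =>
        intro hd hle
        have hd' : (p:ℕ) + d < n := by omega
        have h1 : w p ≤ w ⟨(p:ℕ) + d, hd'⟩ := ih hd' (by omega)
        have h2 := hcon ((p:ℕ) + d) (by omega) (by omega) (by omega)
        calc w p ≤ w ⟨(p:ℕ) + d, hd'⟩ := h1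
          _ ≤ w ⟨(p:ℕ) + d + 1, by omega⟩ := h2
  have hq : w p ≤ w q := by
    have := key ((q:ℕ) - (p:ℕ)) (by omega) (by omega)
    have he : (⟨(p:ℕ) + ((q:ℕ) - (p:ℕ)), by omega⟩ : Fin n) = q := by
      apply Fin.ext; simp; omega
    rwa [he] at this
  exact absurd hval (not_lt.mpr hq)

/-- from three distinct values of an antitone map, get a sorted strictly-descending triple. -/
lemma three_sorted {n : ℕ} {w : Fin n → ℝ} (hw : Antitone w) (a b c : Fin n)
    (hab : w a ≠ w b) (hac : w a ≠ w c) (hbc : w b ≠ w c) :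
    ∃ p q r : Fin n, p < q ∧ q < r ∧ w q < w p ∧ w r < w q := by
  have step : ∀ u v : Fin n, u < v → w u ≠ w v → w v < w u :=
    fun u v h hne => lt_of_le_of_ne (hw h.le) hne.symm
  have hne : ∀ u v : Fin n, w u ≠ w v → u ≠ v := fun u v h he => h (by rw [he])
  rcases (hne a b hab).lt_or_gt with h1 | h1 <;>
  rcases (hne a c hac).lt_or_gt with h2 | h2 <;>
  rcases (hne b c hbc).lt_or_gt with h3 | h3
  · exact ⟨a, b, c, h1, h3, step a b h1 hab, step b c h3 hbc⟩
  · exact ⟨a, c, b, h2, h3, step a c h2 hac, step c b h3 hbc.symm⟩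
  · exact absurd (h2.trans h1) (not_lt.mpr h3.le)
  · exact ⟨c, a, b, h2, h1, step c a h2 hac.symm, step a b h1 hab⟩
  · exact ⟨b, a, c, h1, h2, step b a h1 hab.symm, step a c h2 hac⟩
  · exact absurd (h3.trans h1) (not_lt.mpr h2.le)
  · exact ⟨b, c, a, h3, h2, step b c h3 hbc, step c a h2 hac.symm⟩
  · exact ⟨c, b, a, h3, h1, step c b h3 hbc.symm, step b a h1 hab.symm⟩

/-- the step function is adjacent-below any antitone `w` provided the key corner
inequality holds. -/
lemma adjle_step {n i : ℕ} {w : Fin n → ℝ} (hw : Antitone w)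
    {A B : ℝ} (hA : 0 ≤ A) (hB : 0 ≤ B)
    (hkey : ∀ h : i + 1 < n, A * w ⟨i+1, h⟩ ≤ B * w ⟨i, Nat.lt_of_succ_lt h⟩) :
    AdjLE (fun k : Fin n => if (k : ℕ) ≤ i then A else B) w := by
  intro k hk
  show (if k ≤ i then A else B) * w ⟨k+1, hk⟩
      ≤ (if k+1 ≤ i then A else B) * w ⟨k, Nat.lt_of_succ_lt hk⟩
  have hwk : w ⟨k+1, hk⟩ ≤ w ⟨k, Nat.lt_of_succ_lt hk⟩ :=
    hw (by rw [Fin.mk_le_mk]; omega)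
  split_ifs with h0 h1 h1
  · exact mul_le_mul_of_nonneg_left hwk hA
  · have hki : k = i := by omega
    subst hki
    exact hkey hk
  · omega
  · exact mul_le_mul_of_nonneg_left hwk hB

/-- If the down-set ↓x is a chain in the Bayesian order,
then x has at most binary spectrum. -/
theorem stmt13 {n : ℕ} (hn : 2 ≤ n) (x : Fin n → ℝ) (hx : IsDist x)
    (hchain : ∀ y z : Fin n → ℝ, IsDist y → IsDist z →
      BayesLE y x → BayesLE z x → BayesLE y z ∨ BayesLE z y) :
    (Finset.univ.image x).card ≤ 2 := by
  by_contra hcard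
  push_neg at hcard
  -- sort x decreasingly
  set σ₀ : Equiv.Perm (Fin n) := (Fin.revPerm).trans (Tuple.sort x) with hσ₀
  have hwanti : Antitone (x ∘ ⇑σ₀) := by
    intro k k' hk
    exact Tuple.monotone_sort x (Fin.rev_le_rev.mpr hk)
  set w : Fin n → ℝ := x ∘ ⇑σ₀ with hwdef
  have hw0 : ∀ k, 0 ≤ w k := fun k => hx.1 _
  -- three distinct values of w
  obtain ⟨va, vb, vc, hva, hvb, hvc, hab, hac, hbc⟩ := Finset.two_lt_card_iff.mp hcard
  have hpre : ∀ v ∈ Finset.univ.image x, ∃ k, w k = v := by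
    intro v hv
    obtain ⟨m, -, hm⟩ := Finset.mem_image.mp hv
    exact ⟨σ₀.symm m, by simp [hwdef, hm]⟩
  obtain ⟨ka, hka⟩ := hpre va hva
  obtain ⟨kb, hkb⟩ := hpre vb hvb
  obtain ⟨kc, hkc⟩ := hpre vc hvc
  obtain ⟨p, q, r, hpq, hqr, hwqp, hwrq⟩ := three_sorted hwanti ka kb kc
    (by rw [hka, hkb]; exact hab) (by rw [hka, hkc]; exact hac) (by rw [hkb, hkc]; exact hbc)
  -- two strict descents
  obtain ⟨i, hi1, hpi, hiq, hdi⟩ := exists_descent p q hpq hwqp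
  obtain ⟨j, hj1, hqj, hjr, hdj⟩ := exists_descent q r hqr hwrq
  have hij : i < j := by omega
  -- notation for the corners
  set Fi : Fin n := ⟨i, Nat.lt_of_succ_lt hi1⟩ with hFi
  set Fi1 : Fin n := ⟨i+1, hi1⟩ with hFi1
  set Gj : Fin n := ⟨j, Nat.lt_of_succ_lt hj1⟩ with hGj
  set Gj1 : Fin n := ⟨j+1, hj1⟩ with hGj1
  -- values for y
  have haipos : 0 < w Fi := lt_of_le_of_lt (hw0 Fi1) hdi
  set b' : ℝ := max (w Fi1) (w Fi / 2) with hb'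
  have hb'pos : 0 < b' := lt_of_lt_of_le (half_pos haipos) (le_max_right _ _)
  have hb'lt : b' < w Fi := max_lt hdi (by linarith)
  set Sy : ℝ := ((i+1 : ℕ) : ℝ) * w Fi + ((n - (i+1) : ℕ) : ℝ) * b' with hSydef
  have hSy : 0 < Sy := by
    apply add_pos_of_pos_of_nonneg
    · apply mul_pos _ haipos
      exact_mod_cast Nat.succ_pos i
    · exact mul_nonneg (Nat.cast_nonneg _) hb'pos.le
  set A : ℝ := w Fi / Sy with hAdef
  set B : ℝ := b' / Sy with hBdef
  have hApos : 0 < A := div_pos haipos hSy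
  have hBpos : 0 < B := div_pos hb'pos hSy
  have hBA : B < A := div_lt_div_of_pos_right hb'lt hSy
  -- values for z
  have hcjpos : 0 < w Gj := lt_of_le_of_lt (hw0 Gj1) hdj
  set d' : ℝ := max (w Gj1) (w Gj / 2) with hd'
  have hd'pos : 0 < d' := lt_of_lt_of_le (half_pos hcjpos) (le_max_right _ _)
  have hd'lt : d' < w Gj := max_lt hdj (by linarith)
  set Sz : ℝ := ((j+1 : ℕ) : ℝ) * w Gj + ((n - (j+1) : ℕ) : ℝ) * d' with hSzdef
  have hSz : 0 < Sz := by
    apply add_pos_of_pos_of_nonneg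
    · apply mul_pos _ hcjpos
      exact_mod_cast Nat.succ_pos j
    · exact mul_nonneg (Nat.cast_nonneg _) hd'pos.le
  set C : ℝ := w Gj / Sz with hCdef
  set D : ℝ := d' / Sz with hDdef
  have hCpos : 0 < C := div_pos hcjpos hSz
  have hDpos : 0 < D := div_pos hd'pos hSz
  have hDC : D < C := div_lt_div_of_pos_right hd'lt hSz
  -- the two incomparable elements below x
  set y : Fin n → ℝ := fun m => if ((σ₀.symm m : Fin n) : ℕ) ≤ i then A else B with hydef
  set z : Fin n → ℝ := fun m => if ((σ₀.symm m : Fin n) : ℕ) ≤ j then C else D with hzdef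
  have hyσ : y ∘ ⇑σ₀ = fun k : Fin n => if (k : ℕ) ≤ i then A else B := by
    funext k; simp [hydef]
  have hzσ : z ∘ ⇑σ₀ = fun k : Fin n => if (k : ℕ) ≤ j then C else D := by
    funext k; simp [hzdef]
  -- y is a distribution
  have hyd : IsDist y := by
    constructor
    · intro m
      simp only [hydef]
      split_ifs
      · exact hApos.le
      · exact hBpos.le
    · have hsum : ∑ m, y m = ∑ k, y (σ₀ k) := (Equiv.sum_comp σ₀ y).symm
      rw [hsum]
      have : ∑ k, y (σ₀ k) = ∑ k : Fin n, (if (k : ℕ) ≤ i then A else B) := by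
        apply Finset.sum_congr rfl
        intro k _
        simp [hydef]
      rw [this, sum_step (le_of_lt hi1) A B, hAdef, hBdef,
        ← mul_div_assoc, ← mul_div_assoc, ← add_div, ← hSydef, div_self hSy.ne']
  have hzd : IsDist z := by
    constructor
    · intro m
      simp only [hzdef]
      split_ifs
      · exact hCpos.le
      · exact hDpos.le
    · have hsum : ∑ m, z m = ∑ k, z (σ₀ k) := (Equiv.sum_comp σ₀ z).symm
      rw [hsum]
      have : ∑ k, z (σ₀ k) = ∑ k : Fin n, (if (k : ℕ) ≤ j then C else D) := by
        apply Finset.sum_congr rfl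
        intro k _
        simp [hzdef]
      rw [this, sum_step (le_of_lt hj1) C D, hCdef, hDdef,
        ← mul_div_assoc, ← mul_div_assoc, ← add_div, ← hSzdef, div_self hSz.ne']
  -- y ⊑ x
  have hyx : BayesLE y x := by
    refine ⟨σ₀, ?_, hwanti, ?_⟩
    · rw [hyσ]; exact antitone_step hBA.le
    · show AdjLE (y ∘ ⇑σ₀) (x ∘ ⇑σ₀)
      rw [hyσ]
      apply adjle_step hwanti hApos.le hBpos.le
      intro h
      have h5 : w Fi * w Fi1 ≤ b' * w Fi := by
        have h6 : w Fi1 * w Fi ≤ b' * w Fi :=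
          mul_le_mul_of_nonneg_right (le_max_left _ _) (hw0 Fi)
        calc w Fi * w Fi1 = w Fi1 * w Fi := mul_comm _ _
          _ ≤ b' * w Fi := h6
      have : w Fi / Sy * w Fi1 ≤ b' / Sy * w Fi := by
        rw [div_mul_eq_mul_div, div_mul_eq_mul_div]
        exact div_le_div_of_nonneg_right h5 hSy.le
      exact this
  -- z ⊑ x
  have hzx : BayesLE z x := by
    refine ⟨σ₀, ?_, hwanti, ?_⟩
    · rw [hzσ]; exact antitone_step hDC.le
    · show AdjLE (z ∘ ⇑σ₀) (x ∘ ⇑σ₀)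
      rw [hzσ]
      apply adjle_step hwanti hCpos.le hDpos.le
      intro h
      have h5 : w Gj * w Gj1 ≤ d' * w Gj := by
        have h6 : w Gj1 * w Gj ≤ d' * w Gj :=
          mul_le_mul_of_nonneg_right (le_max_left _ _) (hw0 Gj)
        calc w Gj * w Gj1 = w Gj1 * w Gj := mul_comm _ _
          _ ≤ d' * w Gj := h6
      have : w Gj / Sz * w Gj1 ≤ d' / Sz * w Gj := by
        rw [div_mul_eq_mul_div, div_mul_eq_mul_div]
        exact div_le_div_of_nonneg_right h5 hSz.le
      exact this
  -- the chain hypothesis gives comparability, contradiction in both cases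
  rcases hchain y z hyd hzd hyx hzx with ⟨σ, h1, h2, h3⟩ | ⟨σ, h1, h2, h3⟩
  · -- y ⊑ z : contradiction at position i
    set τ : Equiv.Perm (Fin n) := σ.trans σ₀.symm with hτ
    have hbi : ∀ k : Fin n, ((τ k : Fin n) : ℕ) ≤ i ↔ (k : ℕ) ≤ i :=
      perm_block hBA τ h1
    have hbj : ∀ k : Fin n, ((τ k : Fin n) : ℕ) ≤ j ↔ (k : ℕ) ≤ j :=
      perm_block hDC τ h2
    have hadj := h3 i hi1
    have e1 : (y ∘ ⇑σ) ⟨i, Nat.lt_of_succ_lt hi1⟩ = A :=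
      if_pos ((hbi ⟨i, Nat.lt_of_succ_lt hi1⟩).mpr (le_refl i))
    have e2 : (z ∘ ⇑σ) ⟨i+1, hi1⟩ = C :=
      if_pos ((hbj ⟨i+1, hi1⟩).mpr (show i + 1 ≤ j by omega))
    have e3 : (y ∘ ⇑σ) ⟨i+1, hi1⟩ = B :=
      if_neg (fun h => by
        have h2 : i + 1 ≤ i := (hbi ⟨i+1, hi1⟩).mp h
        omega)
    have e4 : (z ∘ ⇑σ) ⟨i, Nat.lt_of_succ_lt hi1⟩ = C :=
      if_pos ((hbj ⟨i, Nat.lt_of_succ_lt hi1⟩).mpr (show i ≤ j by omega))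
    rw [e1, e2, e3, e4] at hadj
    have : A ≤ B := le_of_mul_le_mul_right hadj hCpos
    linarith
  · -- z ⊑ y : contradiction at position j
    set τ : Equiv.Perm (Fin n) := σ.trans σ₀.symm with hτ
    have hbj : ∀ k : Fin n, ((τ k : Fin n) : ℕ) ≤ j ↔ (k : ℕ) ≤ j :=
      perm_block hDC τ h1
    have hbi : ∀ k : Fin n, ((τ k : Fin n) : ℕ) ≤ i ↔ (k : ℕ) ≤ i :=
      perm_block hBA τ h2
    have hadj := h3 j hj1
    have f1 : (z ∘ ⇑σ) ⟨j, Nat.lt_of_succ_lt hj1⟩ = C :=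
      if_pos ((hbj ⟨j, Nat.lt_of_succ_lt hj1⟩).mpr (le_refl j))
    have f2 : (y ∘ ⇑σ) ⟨j+1, hj1⟩ = B :=
      if_neg (fun h => by
        have h2 : j + 1 ≤ i := (hbi ⟨j+1, hj1⟩).mp h
        omega)
    have f3 : (z ∘ ⇑σ) ⟨j+1, hj1⟩ = D :=
      if_neg (fun h => by
        have h2 : j + 1 ≤ j := (hbj ⟨j+1, hj1⟩).mp h
        omega)
    have f4 : (y ∘ ⇑σ) ⟨j, Nat.lt_of_succ_lt hj1⟩ = B :=
      if_neg (fun h => by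
        have h2 : j ≤ i := (hbi ⟨j, Nat.lt_of_succ_lt hj1⟩).mp h
        omega)
    rw [f1, f2, f3, f4] at hadj
    have : C ≤ D := le_of_mul_le_mul_right hadj hBpos
    linarith
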